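/- Let k be a field of characteristic p > 0 and R = k[x_1,...,x_r] with r ≥ 3. Then the algebra R/(x_1^p,...,x_r^p) fails the Weak Lefschetz Property: for every linear form ℓ there exists a degree i such that ×ℓ : [R/I]_i → [R/I]_{i+1} is neither injective nor surjective. -/

import Mathlib

open MvPolynomial

/-- The dimension of the degree-`i` component of the graded algebra `R/I`, where
`R = k[x_1,...,x_r]` is standard graded: it is the image of the space of homogeneous
polynomials of degree `i` in the quotient. -/
noncomputable def hilb {k : Type*} [Field k] {σ : Type*} (I : Ideal (MvPolynomial σ k))
    (i : ℕ) : ℕ :=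
  Module.finrank k ((homogeneousSubmodule σ k i).map (Ideal.Quotient.mkₐ k I).toLinearMap)

/-- Injectivity of the multiplication map `×f : [R/I]_i → [R/I]_{i + deg f}`. -/
def mulInj {k : Type*} [Field k] {σ : Type*} (I : Ideal (MvPolynomial σ k))
    (f : MvPolynomial σ k) (i : ℕ) : Prop :=
  ∀ g ∈ homogeneousSubmodule σ k i, f * g ∈ I → g ∈ I

/-- Surjectivity of the multiplication map `×f : [R/I]_i → [R/I]_j` (with `j = i + deg f`). -/
def mulSurj {k : Type*} [Field k] {σ : Type*} (I : Ideal (MvPolynomial σ k))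
    (f : MvPolynomial σ k) (i j : ℕ) : Prop :=
  ∀ g ∈ homogeneousSubmodule σ k j, ∃ h ∈ homogeneousSubmodule σ k i, g - f * h ∈ I

/-- The ideal of polynomials all of whose coefficients at "reduced" exponents
(all entries `≤ p-1`) vanish. -/
def Jid (k : Type*) [Field k] (p r : ℕ) : Ideal (MvPolynomial (Fin r) k) where
  carrier := {f | ∀ a : Fin r →₀ ℕ, (∀ j, a j ≤ p - 1) → coeff a f = 0}
  add_mem' hf hg a ha := by rw [coeff_add, hf a ha, hg a ha, add_zero]
  zero_mem' a _ := coeff_zero a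
  smul_mem' c f hf := by
    intro a ha
    rw [smul_eq_mul, coeff_mul]
    refine Finset.sum_eq_zero fun x hx => ?_
    rw [Finset.HasAntidiagonal.mem_antidiagonal] at hx
    have hx2 : ∀ j, x.2 j ≤ p - 1 := fun j =>
      le_trans (le_trans (Nat.le_add_left _ (x.1 j)) (by rw [← Finsupp.add_apply, hx])) (ha j)
    rw [hf x.2 hx2, mul_zero]

lemma mem_Jid {k : Type*} [Field k] {p r : ℕ} {f : MvPolynomial (Fin r) k} :
    f ∈ Jid k p r ↔ ∀ a : Fin r →₀ ℕ, (∀ j, a j ≤ p - 1) → coeff a f = 0 := Iff.rfl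

lemma span_le_Jid {k : Type*} [Field k] {p r : ℕ} (hp : 1 ≤ p) :
    Ideal.span (Set.range fun i => (X i : MvPolynomial (Fin r) k) ^ p) ≤ Jid k p r := by
  rw [Ideal.span_le]
  rintro _ ⟨j, rfl⟩
  intro a ha
  rw [coeff_X_pow, if_neg]
  intro h
  have := ha j
  rw [← h, Finsupp.single_eq_same] at this
  omega

lemma degree_eq_sum {r : ℕ} (a : Fin r →₀ ℕ) : a.degree = ∑ j : Fin r, a j :=
  Finset.sum_subset (Finset.subset_univ _) (fun _ _ hx => Finsupp.notMem_support_iff.mp hx)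

lemma my_degree_single {r : ℕ} (j : Fin r) (n : ℕ) : (Finsupp.single j n).degree = n := by
  rw [degree_eq_sum]
  simp [Finsupp.single_apply]

lemma my_degree_add {r : ℕ} (a b : Fin r →₀ ℕ) :
    (a + b).degree = a.degree + b.degree := by
  simp [degree_eq_sum, Finset.sum_add_distrib]

lemma my_isHomog_degree {k : Type*} [Field k] {r n : ℕ} {f : MvPolynomial (Fin r) k}
    (hf : f.IsHomogeneous n) {a : Fin r →₀ ℕ} (ha : coeff a f ≠ 0) : a.degree = n := by
  rw [Finsupp.degree_eq_weight_one]
  exact hf ha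

lemma degree_one_single {r : ℕ} {v : Fin r →₀ ℕ} (h : v.degree = 1) :
    ∃ j, v = Finsupp.single j 1 := by
  have hv : v ≠ 0 := by
    intro h0; rw [h0, map_zero] at h; omega
  obtain ⟨j, hj⟩ := Finsupp.ne_iff.mp hv
  rw [Finsupp.coe_zero, Pi.zero_apply] at hj
  refine ⟨j, ?_⟩
  have hj' : j ∈ v.support := Finsupp.mem_support_iff.mpr hj
  have hle : v j ≤ v.degree := Finsupp.le_degree j v
  ext i
  by_cases hij : i = j
  · subst hij
    rw [Finsupp.single_eq_same]
    have : 1 ≤ v i := Nat.one_le_iff_ne_zero.mpr hj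
    omega
  · rw [Finsupp.single_eq_of_ne' (Ne.symm hij)]
    by_contra hne
    have hi : i ∈ v.support := Finsupp.mem_support_iff.mpr hne
    have hsum : v i + v j ≤ v.degree := by
      rw [Finsupp.degree]
      change v i + v j ≤ ∑ x ∈ v.support, v x
      have h1 := Finset.add_sum_erase v.support v hi
      have hji : j ∈ v.support.erase i := Finset.mem_erase.mpr ⟨fun hh => hij hh.symm, hj'⟩
      have h2 := Finset.add_sum_erase _ v hji
      omega
    have : 1 ≤ v i := Nat.one_le_iff_ne_zero.mpr hne
    have : 1 ≤ v j := Nat.one_le_iff_ne_zero.mpr hj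
    omega

lemma lin_pow_mem {k : Type*} [Field k] {p r : ℕ} (hp : p.Prime) [CharP k p]
    {ℓ : MvPolynomial (Fin r) k} (hℓ : ℓ ∈ homogeneousSubmodule (Fin r) k 1) :
    ℓ ^ p ∈ Ideal.span (Set.range fun i => (X i : MvPolynomial (Fin r) k) ^ p) := by
  haveI := Fact.mk hp
  have he : ℓ ^ p = ∑ v ∈ ℓ.support, monomial v (coeff v ℓ) ^ p := by
    conv_lhs => rw [ℓ.as_sum]
    rw [sum_pow_char]
  rw [he]
  apply Ideal.sum_mem
  intro v hv
  have hdeg : v.degree = 1 :=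
    my_isHomog_degree ((mem_homogeneousSubmodule _ _).1 hℓ) (mem_support_iff.1 hv)
  obtain ⟨j, rfl⟩ := degree_one_single hdeg
  rw [monomial_pow]
  have hsm : (p • Finsupp.single j 1) = Finsupp.single j p := by
    rw [Finsupp.smul_single, smul_eq_mul, mul_one]
  rw [hsm, ← C_mul_X_pow_eq_monomial]
  exact Ideal.mul_mem_left _ _ (Ideal.subset_span ⟨j, rfl⟩)

lemma pump {k : Type*} [Field k] {p r : ℕ} (hp2 : 2 ≤ p) :
    ∀ (d : ℕ) (f : MvPolynomial (Fin r) k) (a : Fin r →₀ ℕ),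
      (∀ j, a j ≤ p - 1) → coeff a f ≠ 0 → a.degree + d ≤ r * (p - 1) →
      ∃ c : Fin r →₀ ℕ, c.degree = d ∧ ∃ b : Fin r →₀ ℕ, (∀ j, b j ≤ p - 1) ∧
        coeff b (f * monomial c 1) ≠ 0 ∧ b.degree = a.degree + d := by
  intro d
  induction d with
  | zero =>
    intro f a ha hca _
    exact ⟨0, map_zero _, a, ha,
      by rwa [monomial_zero', C_1, mul_one], by omega⟩
  | succ d ih =>
    intro f a ha hca hle
    have hex : ∃ j, a j < p - 1 := by
      by_contra hcon
      push_neg at hcon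
      have h' : ∀ j, a j = p - 1 := fun j => le_antisymm (ha j) (hcon j)
      have hd : a.degree = r * (p - 1) := by
        rw [degree_eq_sum]
        simp only [h']
        rw [Finset.sum_const, Finset.card_univ, Fintype.card_fin, smul_eq_mul]
      omega
    obtain ⟨j, hj⟩ := hex
    have hca' : coeff (a + Finsupp.single j 1) (f * X j) ≠ 0 := by
      rwa [coeff_mul_X]
    have ha' : ∀ j' : Fin r, (a + Finsupp.single j 1 : Fin r →₀ ℕ) j' ≤ p - 1 := by
      intro j'
      rw [Finsupp.add_apply, Finsupp.single_apply]
      by_cases h : j = j'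
      · rw [if_pos h]; subst h; omega
      · rw [if_neg h]; simpa using ha j'
    have hdeg' : (a + Finsupp.single j 1 : Fin r →₀ ℕ).degree = a.degree + 1 := by
      rw [my_degree_add, my_degree_single]
    obtain ⟨c, hc, b, hb, hcb, hbd⟩ := ih (f * X j) (a + Finsupp.single j 1) ha' hca'
      (by omega)
    refine ⟨c + Finsupp.single j 1, by rw [my_degree_add, my_degree_single, hc], b, hb, ?_,
      by omega⟩
    have hX : (X j : MvPolynomial (Fin r) k) = monomial (Finsupp.single j 1) 1 := by
      rw [← pow_one (X j : MvPolynomial (Fin r) k), X_pow_eq_monomial]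
    have heq : f * monomial (c + Finsupp.single j 1) 1 = f * X j * monomial c 1 := by
      rw [hX, mul_assoc, monomial_mul, one_mul, add_comm]
    rwa [heq]

/-- in characteristic `p > 0` and `r ≥ 3` variables, `R/(x_1^p,...,x_r^p)`
fails the WLP: every linear form fails to have maximal rank in some degree. -/
theorem stmt3 (k : Type*) [Field k] (p : ℕ) (hp : p.Prime) [CharP k p]
    (r : ℕ) (hr : 3 ≤ r) (I : Ideal (MvPolynomial (Fin r) k))
    (hI : I = Ideal.span (Set.range fun i => (X i : MvPolynomial (Fin r) k) ^ p)) :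
    ∀ ℓ ∈ homogeneousSubmodule (Fin r) k 1, ∃ i : ℕ,
      ¬ mulInj I ℓ i ∧ ¬ mulSurj I ℓ i (i + 1) := by
  intro ℓ hℓ
  have hp2 : 2 ≤ p := hp.two_le
  have hIJ : I ≤ Jid k p r := hI ▸ span_le_Jid (by omega)
  have hlp : ℓ ^ p ∈ I := hI ▸ lin_pow_mem hp hℓ
  refine ⟨p - 1, ?_, ?_⟩
  · -- not injective
    by_cases hl0 : ℓ = 0
    · intro h
      set j0 : Fin r := ⟨0, by omega⟩ with hj0
      have hmon : (monomial (Finsupp.single j0 (p - 1)) (1 : k)) ∈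
          homogeneousSubmodule (Fin r) k (p - 1) :=
        (mem_homogeneousSubmodule _ _).2 (isHomogeneous_monomial _ (my_degree_single _ _))
      have hin := h _ hmon (by rw [hl0, zero_mul]; exact I.zero_mem)
      have hz := hIJ hin (Finsupp.single j0 (p - 1))
        (fun j => by rw [Finsupp.single_apply]; split <;> omega)
      rw [coeff_monomial, if_pos rfl] at hz
      exact one_ne_zero hz
    · intro h
      have hhom : (ℓ ^ (p - 1)).IsHomogeneous (p - 1) := by
        have h1 := (mem_homogeneousSubmodule _ _).1 hℓ
        simpa using h1.pow (p - 1)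
      have hmul : ℓ * ℓ ^ (p - 1) ∈ I := by
        have he : ℓ * ℓ ^ (p - 1) = ℓ ^ p := by
          rw [← pow_succ']; congr 1; omega
        rw [he]; exact hlp
      have hin := h _ ((mem_homogeneousSubmodule _ _).2 hhom) hmul
      have hzero : ℓ ^ (p - 1) = 0 := by
        ext a
        rw [coeff_zero]
        by_cases hred : ∀ j, a j ≤ p - 1
        · exact hIJ hin a hred
        · push_neg at hred
          obtain ⟨j, hjred⟩ := hred
          by_contra hc
          have hda := my_isHomog_degree hhom hc
          have := Finsupp.le_degree j a
          omega
      exact hl0 ((pow_eq_zero_iff (by omega : p - 1 ≠ 0)).mp hzero)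
  · -- not surjective
    intro h
    by_cases hl0 : ℓ = 0
    · set j0 : Fin r := ⟨0, by omega⟩ with hj0
      set j1 : Fin r := ⟨1, by omega⟩ with hj1
      have hne : j0 ≠ j1 := by
        intro hc
        rw [hj0, hj1, Fin.mk.injEq] at hc
        omega
      set a0 : Fin r →₀ ℕ := Finsupp.single j0 (p - 1) + Finsupp.single j1 1 with ha0
      have hghom : (monomial a0 (1 : k)) ∈ homogeneousSubmodule (Fin r) k (p - 1 + 1) :=
        (mem_homogeneousSubmodule _ _).2 (isHomogeneous_monomial _
          (by rw [ha0, my_degree_add, my_degree_single, my_degree_single]))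
      obtain ⟨h', hh', hmem⟩ := h _ hghom
      rw [hl0, zero_mul, sub_zero] at hmem
      have hred : ∀ j, a0 j ≤ p - 1 := by
        intro j
        rw [ha0, Finsupp.add_apply, Finsupp.single_apply, Finsupp.single_apply]
        by_cases h0 : j0 = j
        · by_cases h1 : j1 = j
          · exact absurd (h0.trans h1.symm) hne
          · rw [if_pos h0, if_neg h1]; omega
        · rw [if_neg h0]; split <;> omega
      have hz := hIJ hmem a0 hred
      rw [coeff_monomial, if_pos rfl] at hz
      exact one_ne_zero hz
    · have hhom : (ℓ ^ (p - 1)).IsHomogeneous (p - 1) := by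
        have h1 := (mem_homogeneousSubmodule _ _).1 hℓ
        simpa using h1.pow (p - 1)
      have hnotJ : ℓ ^ (p - 1) ∉ Jid k p r := by
        intro hJ
        apply hl0
        refine (pow_eq_zero_iff (by omega : p - 1 ≠ 0)).mp ?_
        ext a
        rw [coeff_zero]
        by_cases hred : ∀ j, a j ≤ p - 1
        · exact hJ a hred
        · push_neg at hred
          obtain ⟨j, hjred⟩ := hred
          by_contra hc
          have hda := my_isHomog_degree hhom hc
          have := Finsupp.le_degree j a
          omega
      rw [mem_Jid] at hnotJ
      push_neg at hnotJ
      obtain ⟨a, hared, hca⟩ := hnotJ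
      have hadeg : a.degree = p - 1 := my_isHomog_degree hhom hca
      have h3 : 3 * (p - 1) ≤ r * (p - 1) := Nat.mul_le_mul_right _ hr
      set s := r * (p - 1) with hs
      obtain ⟨c, hcdeg, b, hbred, hcb, hbdeg⟩ := pump hp2 (s - (2 * p - 1)) (ℓ ^ (p - 1)) a
        hared hca (by omega)
      set u := ℓ ^ (p - 1) * monomial c 1 with hu
      have hbdeg' : b.degree = s - p := by omega
      set e : Fin r →₀ ℕ := Finsupp.equivFunOnFinite.symm (fun j => p - 1 - b j) with he
      have hee : ∀ j, e j = p - 1 - b j := fun j => rfl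
      have hedeg : e.degree = p := by
        have hsum : ∑ j : Fin r, e j + ∑ j : Fin r, b j = s := by
          rw [← Finset.sum_add_distrib]
          have hsum2 : ∑ j : Fin r, (e j + b j) = ∑ j : Fin r, (p - 1) := by
            refine Finset.sum_congr rfl fun j _ => ?_
            rw [hee j]
            have := hbred j
            omega
          rw [hsum2, Finset.sum_const, Finset.card_univ, Fintype.card_fin, smul_eq_mul, hs]
        have hbs : ∑ j : Fin r, b j = s - p := by rw [← degree_eq_sum]; exact hbdeg'
        rw [degree_eq_sum]
        omega
      have hghom : (monomial e (1 : k)) ∈ homogeneousSubmodule (Fin r) k (p - 1 + 1) :=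
        (mem_homogeneousSubmodule _ _).2 (isHomogeneous_monomial _ (by omega))
      obtain ⟨h', hh', hmem⟩ := h _ hghom
      have hebred : ∀ j, (e + b : Fin r →₀ ℕ) j ≤ p - 1 := by
        intro j
        rw [Finsupp.add_apply, hee j]
        have := hbred j
        omega
      have hz : coeff (e + b) ((monomial e 1 - ℓ * h') * u) = 0 :=
        (Jid k p r).mul_mem_right u (hIJ hmem) (e + b) hebred
      have hlpow : ℓ * ℓ ^ (p - 1) = ℓ ^ p := by
        rw [← pow_succ']; congr 1; omega
      have hz2 : coeff (e + b) (ℓ * h' * u) = 0 := by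
        have hrw : ℓ * h' * u = ℓ ^ p * (h' * monomial c 1) := by
          rw [hu, ← hlpow]; ring
        rw [hrw]
        exact (Jid k p r).mul_mem_right _ (hIJ hlp) (e + b) hebred
      have hg : coeff (e + b) ((monomial e 1 : MvPolynomial (Fin r) k) * u) = coeff b u := by
        rw [coeff_monomial_mul, one_mul]
      rw [sub_mul, coeff_sub, hg, hz2, sub_zero] at hz
      exact hcb hz
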